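/- Let $K : \mathbb{R}^n \times (0,1] \to \mathbb{R}$ satisfy $|K(x,t)| \leq C(t^{1/(2\alpha)}+|x|)^{-(n+1)}$, and let $f : \mathbb{R}^n \times [0,1] \to \mathbb{R}$ be bounded and supported outside $B(0,2) \times [0,1]$ in space, i.e., $f(y,s) = 0$ for $|y| < 2$. Then for all $(x_0, t_0) \in B(0,1) \times (0,1]$, $\big| \int_0^{t_0} \int_{\mathbb{R}^n} K(x_0 - y, t_0 - s) f(y,s)\, dy\, ds \big| \leq C' \sup_{x \in \mathbb{R}^n} \int_0^1 \int_{B(x,1)} |f(y,s)|\, dy\, ds$, where $C'$ depends only on $n$, $\alpha$, and $C$. -/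

import Mathlib

open MeasureTheory Real Metric intervalIntegral

lemma aux_swap {n : ℕ} (W F : EuclideanSpace ℝ (Fin n) → ENNReal)
    (hW : Measurable W) (hWtop : ∀ x, W x ≠ ⊤) (hF : Measurable F) :
    ∫⁻ y, (∫⁻ x in ball y 1, W x) * F y
      = ∫⁻ x, W x * ∫⁻ y in ball x 1, F y := by
  set ψ : EuclideanSpace ℝ (Fin n) → EuclideanSpace ℝ (Fin n) → ENNReal :=
    fun y x => if dist x y < 1 then W x * F y else 0 with hψ
  have hmeas : Measurable (Function.uncurry ψ) := by
    apply Measurable.ite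
    · exact (isOpen_lt (continuous_snd.dist continuous_fst) continuous_const).measurableSet
    · exact (hW.comp measurable_snd).mul (hF.comp measurable_fst)
    · exact measurable_const
  have hA : ∀ y, ∫⁻ x, ψ y x = (∫⁻ x in ball y 1, W x) * F y := by
    intro y
    have : ∀ x, ψ y x = (ball y 1).indicator (fun x => W x * F y) x := by
      intro x
      by_cases h : x ∈ ball y 1
      · simp [hψ, Set.indicator_of_mem h, mem_ball.mp h]
      · have : ¬ dist x y < 1 := fun hc => h (mem_ball.mpr hc)
        simp [hψ, Set.indicator_of_notMem h, this]
    rw [lintegral_congr this, lintegral_indicator measurableSet_ball,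
      lintegral_mul_const _ hW]
  have hB : ∀ x, ∫⁻ y, ψ y x = W x * ∫⁻ y in ball x 1, F y := by
    intro x
    have : ∀ y, ψ y x = W x * (ball x 1).indicator F y := by
      intro y
      by_cases h : y ∈ ball x 1
      · have hd : dist x y < 1 := by rw [dist_comm]; exact mem_ball.mp h
        simp [hψ, Set.indicator_of_mem h, hd]
      · have hd : ¬ dist x y < 1 := fun hc => h (mem_ball.mpr (by rw [dist_comm]; exact hc))
        simp [hψ, Set.indicator_of_notMem h, hd]
    rw [lintegral_congr this, lintegral_const_mul' _ _ (hWtop x),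
      lintegral_indicator measurableSet_ball]
  calc ∫⁻ y, (∫⁻ x in ball y 1, W x) * F y
      = ∫⁻ y, ∫⁻ x, ψ y x := lintegral_congr fun y => (hA y).symm
    _ = ∫⁻ x, ∫⁻ y, ψ y x := lintegral_lintegral_swap hmeas.aemeasurable
    _ = ∫⁻ x, W x * ∫⁻ y in ball x 1, F y := lintegral_congr hB

lemma aux_swap2 {α β : Type*} [MeasurableSpace α] [MeasurableSpace β]
    (μ : Measure α) (ν : Measure β) [SFinite μ] [SFinite ν]
    (W : β → ENNReal) (hW : Measurable W) (hWtop : ∀ x, W x ≠ ⊤)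
    (G : α → β → ENNReal) (hG : Measurable (Function.uncurry G)) :
    ∫⁻ s, ∫⁻ x, W x * G s x ∂ν ∂μ = ∫⁻ x, W x * ∫⁻ s, G s x ∂μ ∂ν := by
  have hm : Measurable (Function.uncurry fun s x => W x * G s x) :=
    (hW.comp measurable_snd).mul hG
  rw [lintegral_lintegral_swap hm.aemeasurable]
  exact lintegral_congr fun x => lintegral_const_mul' _ _ (hWtop x)

/-- Localization estimate: the far-field contribution of a space-time convolution
against a kernel with Poisson-type decay `(t^{1/(2α)}+|x|)^{-(n+1)}` is controlled by
local `L¹` averages of `f` on unit parabolic cylinders. -/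
theorem stmt_9 (n : ℕ) (hn : 1 ≤ n) (α : ℝ) (hα : 1/2 < α) (hα' : α < 1)
    (C : ℝ) (hC : 0 ≤ C) :
    ∃ C' : ℝ, 0 < C' ∧
      ∀ (K : EuclideanSpace ℝ (Fin n) → ℝ → ℝ)
        (f : EuclideanSpace ℝ (Fin n) → ℝ → ℝ) (M : ℝ),
        (∀ x t, 0 < t → t ≤ 1 → |K x t| ≤ C * (t ^ (1/(2*α)) + ‖x‖) ^ (-(n : ℝ) - 1)) →
        Measurable (Function.uncurry f) →
        (∀ y s, |f y s| ≤ M) →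
        (∀ y s, ‖y‖ < 2 → f y s = 0) →
        ∀ (x₀ : EuclideanSpace ℝ (Fin n)) (t₀ : ℝ), ‖x₀‖ < 1 → 0 < t₀ → t₀ ≤ 1 →
          |∫ s in (0:ℝ)..t₀, ∫ y, K (x₀ - y) (t₀ - s) * f y s|
            ≤ C' * ⨆ x : EuclideanSpace ℝ (Fin n),
                ∫ s in (0:ℝ)..1, ∫ y in ball x 1, |f y s| := by
  classical
  set p : ℝ := (n : ℝ) + 1 with hp_def
  have hppos : (0 : ℝ) < p := by positivity
  set V : ENNReal := volume (ball (0 : EuclideanSpace ℝ (Fin n)) 1) with hV_def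
  have hV0 : V ≠ 0 := (measure_ball_pos _ _ one_pos).ne'
  have hVtop : V ≠ ⊤ := measure_ball_lt_top.ne
  have hWint : Integrable (fun x : EuclideanSpace ℝ (Fin n) => (1 + ‖x‖) ^ (-p)) := by
    apply integrable_one_add_norm
    rw [finrank_euclideanSpace_fin]
    simp [hp_def]
  set IW : ℝ := ∫ x : EuclideanSpace ℝ (Fin n), (1 + ‖x‖) ^ (-p) with hIW_def
  have hIWnn : 0 ≤ IW := integral_nonneg fun x => rpow_nonneg (by positivity) _
  have h3p : (0 : ℝ) < 3 ^ p := rpow_pos_of_pos (by norm_num) _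
  have hA0 : 0 ≤ C * 3 ^ p * (V⁻¹).toReal * IW :=
    mul_nonneg (mul_nonneg (mul_nonneg hC h3p.le) ENNReal.toReal_nonneg) hIWnn
  refine ⟨C * 3 ^ p * (V⁻¹).toReal * IW + 1, by linarith, ?_⟩
  intro K f M hK hf hM hsupp x₀ t₀ hx₀ ht₀ ht₀1
  have hM0 : 0 ≤ M := le_trans (abs_nonneg _) (hM 0 0)
  set S : ℝ := ⨆ x : EuclideanSpace ℝ (Fin n),
      ∫ s in (0:ℝ)..1, ∫ y in ball x 1, |f y s| with hS_def
  have hfs : ∀ s, Measurable fun y => f y s :=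
    fun s => hf.comp (measurable_id.prodMk measurable_const)
  -- the weight
  set W : EuclideanSpace ℝ (Fin n) → ENNReal :=
    fun x => ENNReal.ofReal ((1 + ‖x - x₀‖) ^ (-p)) with hW_def
  have hWmeas : Measurable W := by fun_prop
  have hWtop : ∀ x, W x ≠ ⊤ := fun x => ENNReal.ofReal_ne_top
  have hIWe : ∫⁻ x, W x = ENNReal.ofReal IW := by
    have h1 : ∫⁻ x, W x = ∫⁻ x : EuclideanSpace ℝ (Fin n),
        ENNReal.ofReal ((1 + ‖x‖) ^ (-p)) := by
      have := lintegral_add_right_eq_self (μ := volume)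
        (fun x : EuclideanSpace ℝ (Fin n) => ENNReal.ofReal ((1 + ‖x‖) ^ (-p))) (-x₀)
      simpa [hW_def, sub_eq_add_neg] using this
    rw [h1, ← ofReal_integral_eq_lintegral_ofReal hWint
      (ae_of_all _ fun x => rpow_nonneg (by positivity) _)]
  -- local averages
  set G : EuclideanSpace ℝ (Fin n) → ℝ → ENNReal :=
    fun x s => ∫⁻ y in ball x 1, ENNReal.ofReal |f y s| with hG_def
  have hGmeas : Measurable fun q : ℝ × EuclideanSpace ℝ (Fin n) => G q.2 q.1 := by
    have heq : ∀ q : ℝ × EuclideanSpace ℝ (Fin n),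
        G q.2 q.1 = ∫⁻ y, (if dist y q.2 < 1 then ENNReal.ofReal |f y q.1| else 0) := by
      intro q
      show (∫⁻ y in ball q.2 1, ENNReal.ofReal |f y q.1|) = _
      rw [← lintegral_indicator measurableSet_ball]
      exact lintegral_congr fun y => by simp [Set.indicator_apply, mem_ball]
    simp only [heq]
    apply Measurable.lintegral_prod_right
      (f := fun (q : ℝ × EuclideanSpace ℝ (Fin n)) (y : EuclideanSpace ℝ (Fin n)) =>
        if dist y q.2 < 1 then ENNReal.ofReal |f y q.1| else 0)
    apply Measurable.ite
    · exact measurableSet_lt (measurable_snd.dist measurable_fst.snd)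
        measurable_const
    · exact ((hf.comp (measurable_snd.prodMk
        (measurable_fst.comp measurable_fst))).abs).ennreal_ofReal
    · exact measurable_const
  set ce : ENNReal := ENNReal.ofReal (C * 3 ^ p) * V⁻¹ with hce_def
  have hce : ce ≠ ⊤ :=
    ENNReal.mul_ne_top ENNReal.ofReal_ne_top (ENNReal.inv_ne_top.mpr hV0)
  set H : ℝ → ENNReal := fun s => ce * ∫⁻ x, W x * G x s with hH_def
  have hHmeas : Measurable H := by
    apply Measurable.const_mul
    exact Measurable.lintegral_prod_right (f := fun s x => W x * G x s)
      ((hWmeas.comp measurable_snd).mul hGmeas)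
  have hGle : ∀ x s, G x s ≤ ENNReal.ofReal M * V := by
    intro x s
    calc G x s ≤ ∫⁻ _ in ball x 1, ENNReal.ofReal M :=
          lintegral_mono fun y => ENNReal.ofReal_le_ofReal (hM y s)
      _ = ENNReal.ofReal M * volume (ball x 1) := setLIntegral_const _ _
      _ = ENNReal.ofReal M * V := by rw [hV_def, Measure.addHaar_ball_center]
  have hHle : ∀ s, H s ≤ ce * (ENNReal.ofReal IW * (ENNReal.ofReal M * V)) := by
    intro s
    refine mul_le_mul_right ?_ _
    calc ∫⁻ x, W x * G x s ≤ ∫⁻ x, W x * (ENNReal.ofReal M * V) :=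
          lintegral_mono fun x => mul_le_mul_right (hGle x s) _
      _ = (∫⁻ x, W x) * (ENNReal.ofReal M * V) := lintegral_mul_const _ hWmeas
      _ = ENNReal.ofReal IW * (ENNReal.ofReal M * V) := by rw [hIWe]
  have hBtop : ce * (ENNReal.ofReal IW * (ENNReal.ofReal M * V)) ≠ ⊤ :=
    ENNReal.mul_ne_top hce (ENNReal.mul_ne_top ENNReal.ofReal_ne_top
      (ENNReal.mul_ne_top ENNReal.ofReal_ne_top hVtop))
  have hHtop : ∀ s, H s ≠ ⊤ := fun s => ne_top_of_le_ne_top hBtop (hHle s)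
  -- the key pointwise bound
  have hkey : ∀ t, 0 < t → t ≤ 1 → ∀ y s,
      ENNReal.ofReal |K (x₀ - y) t * f y s|
        ≤ ce * (∫⁻ x in ball y 1, W x) * ENNReal.ofReal |f y s| := by
    intro t ht ht1 y s
    by_cases hfy : f y s = 0
    · simp [hfy]
    · have h2 : 2 ≤ ‖y‖ := le_of_not_gt fun h => hfy (hsupp y s h)
      set d : ℝ := ‖x₀ - y‖ with hd_def
      have h4 : ‖y - x₀‖ = d := by rw [hd_def, norm_sub_rev]
      have hd1 : 1 ≤ d := by
        have h3 : ‖y‖ - ‖x₀‖ ≤ ‖y - x₀‖ := norm_sub_norm_le y x₀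
        linarith
      have hd0 : (0 : ℝ) < d := lt_of_lt_of_le one_pos hd1
      have k1 : |K (x₀ - y) t| ≤ C * d ^ (-p) := by
        refine le_trans (hK _ t ht ht1) ?_
        have he : -(n : ℝ) - 1 = -p := by rw [hp_def]; ring
        rw [he]
        refine mul_le_mul_of_nonneg_left ?_ hC
        exact Real.rpow_le_rpow_of_nonpos hd0
          (le_add_of_nonneg_left (Real.rpow_nonneg ht.le _)) (by linarith)
      have k2 : C * d ^ (-p) = C * 3 ^ p * (3 * d) ^ (-p) := by
        rw [Real.mul_rpow (by norm_num) hd0.le,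
          Real.rpow_neg (by norm_num : (0:ℝ) ≤ 3)]
        field_simp
      have k3 : ENNReal.ofReal ((3 * d) ^ (-p)) * V ≤ ∫⁻ x in ball y 1, W x := by
        have hb : ∀ x ∈ ball y 1, ENNReal.ofReal ((3 * d) ^ (-p)) ≤ W x := by
          intro x hx
          apply ENNReal.ofReal_le_ofReal
          apply Real.rpow_le_rpow_of_nonpos (by positivity)
          · have h5 : ‖x - x₀‖ ≤ ‖x - y‖ + ‖y - x₀‖ := norm_sub_le_norm_sub_add_norm_sub x y x₀
            have h6 : ‖x - y‖ < 1 := by rw [← dist_eq_norm]; exact mem_ball.mp hx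
            linarith
          · linarith
        calc ENNReal.ofReal ((3 * d) ^ (-p)) * V
            = ENNReal.ofReal ((3 * d) ^ (-p)) * volume (ball y 1) := by
              rw [hV_def, ← Measure.addHaar_ball_center volume y 1]
          _ = ∫⁻ _ in ball y 1, ENNReal.ofReal ((3 * d) ^ (-p)) :=
              (setLIntegral_const _ _).symm
          _ ≤ ∫⁻ x in ball y 1, W x := setLIntegral_mono hWmeas hb
      have k4 : ENNReal.ofReal |K (x₀ - y) t| ≤ ce * ∫⁻ x in ball y 1, W x := by
        calc ENNReal.ofReal |K (x₀ - y) t|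
            ≤ ENNReal.ofReal (C * 3 ^ p * (3 * d) ^ (-p)) := by
              rw [← k2]; exact ENNReal.ofReal_le_ofReal k1
          _ = ENNReal.ofReal (C * 3 ^ p) * ENNReal.ofReal ((3 * d) ^ (-p)) :=
              ENNReal.ofReal_mul (by positivity)
          _ = ENNReal.ofReal (C * 3 ^ p) * (ENNReal.ofReal ((3 * d) ^ (-p)) * V * V⁻¹) := by
              rw [mul_assoc (ENNReal.ofReal ((3 * d) ^ (-p))),
                ENNReal.mul_inv_cancel hV0 hVtop, mul_one]
          _ ≤ ENNReal.ofReal (C * 3 ^ p) * ((∫⁻ x in ball y 1, W x) * V⁻¹) :=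
              mul_le_mul_right (mul_le_mul_left k3 _) _
          _ = ce * ∫⁻ x in ball y 1, W x := by rw [hce_def]; ring
      calc ENNReal.ofReal |K (x₀ - y) t * f y s|
          = ENNReal.ofReal |K (x₀ - y) t| * ENNReal.ofReal |f y s| := by
            rw [abs_mul, ENNReal.ofReal_mul (abs_nonneg _)]
        _ ≤ ce * (∫⁻ x in ball y 1, W x) * ENNReal.ofReal |f y s| :=
            mul_le_mul_left k4 _
  -- pointwise-in-s bound
  have step2 : ∀ s ∈ Set.Ico (0:ℝ) t₀,
      |∫ y, K (x₀ - y) (t₀ - s) * f y s| ≤ (H s).toReal := by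
    intro s hs
    have ht : 0 < t₀ - s := sub_pos.mpr hs.2
    have ht1 : t₀ - s ≤ 1 := by have := hs.1; linarith
    have l1 : |∫ y, K (x₀ - y) (t₀ - s) * f y s|
        ≤ (∫⁻ y, ENNReal.ofReal |K (x₀ - y) (t₀ - s) * f y s|).toReal := by
      have := norm_integral_le_lintegral_norm (μ := (volume : Measure (EuclideanSpace ℝ (Fin n))))
        (fun y => K (x₀ - y) (t₀ - s) * f y s)
      simpa [Real.norm_eq_abs, abs_mul] using this
    refine l1.trans (ENNReal.toReal_mono (hHtop s) ?_)
    calc ∫⁻ y, ENNReal.ofReal |K (x₀ - y) (t₀ - s) * f y s|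
        ≤ ∫⁻ y, ce * ((∫⁻ x in ball y 1, W x) * ENNReal.ofReal |f y s|) := by
          refine lintegral_mono fun y => ?_
          have := hkey _ ht ht1 y s
          rwa [mul_assoc] at this
      _ = ce * ∫⁻ y, (∫⁻ x in ball y 1, W x) * ENNReal.ofReal |f y s| :=
          lintegral_const_mul' ce _ hce
      _ = ce * ∫⁻ x, W x * G x s := by
          rw [aux_swap W _ hWmeas hWtop ((hfs s).abs.ennreal_ofReal)]
      _ = H s := rfl
  -- integrability of the dominating function
  have hHint : IntegrableOn (fun s => (H s).toReal) (Set.Ico (0:ℝ) t₀) := by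
    refine Integrable.mono'
      (g := fun _ => (ce * (ENNReal.ofReal IW * (ENNReal.ofReal M * V))).toReal)
      (integrableOn_const measure_Ico_lt_top.ne)
      (ENNReal.measurable_toReal.comp hHmeas).aestronglyMeasurable
      (ae_of_all _ fun s => ?_)
    rw [Real.norm_eq_abs, abs_of_nonneg ENNReal.toReal_nonneg]
    exact ENNReal.toReal_mono hBtop (hHle s)
  -- bounds for the sup
  have hG'bound : ∀ x s, ∫ y in ball x 1, |f y s| ≤ M * V.toReal := by
    intro x s
    have h1 : ∫ y in ball x 1, |f y s| ≤ ∫ _ in ball x 1, M :=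
      integral_mono_of_nonneg (ae_of_all _ fun y => abs_nonneg _)
        (integrableOn_const measure_ball_lt_top.ne)
        (ae_of_all _ fun y => hM y s)
    have h2 : ∫ _ in ball x 1, M = M * V.toReal := by
      rw [setIntegral_const, smul_eq_mul, hV_def, measureReal_def, Measure.addHaar_ball_center, mul_comm]
    linarith
  have int_a : ∀ (x : EuclideanSpace ℝ (Fin n)) s,
      IntegrableOn (fun y => |f y s|) (ball x 1) := by
    intro x s
    refine Integrable.mono' (g := fun _ => M)
      (integrableOn_const measure_ball_lt_top.ne)
      ((hfs s).abs.aestronglyMeasurable) (ae_of_all _ fun y => ?_)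
    rw [Real.norm_eq_abs, abs_abs]; exact hM y s
  have hG'meas : ∀ x : EuclideanSpace ℝ (Fin n),
      StronglyMeasurable fun s => ∫ y in ball x 1, |f y s| := by
    intro x
    apply StronglyMeasurable.integral_prod_right
      (f := fun (s : ℝ) (y : EuclideanSpace ℝ (Fin n)) => |f y s|)
    exact ((hf.comp measurable_swap).abs).stronglyMeasurable
  have hG'int : ∀ x : EuclideanSpace ℝ (Fin n),
      IntegrableOn (fun s => ∫ y in ball x 1, |f y s|) (Set.Ioc (0:ℝ) 1) := by
    intro x
    refine Integrable.mono' (g := fun _ => M * V.toReal)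
      (integrableOn_const measure_Ioc_lt_top.ne)
      (hG'meas x).aestronglyMeasurable (ae_of_all _ fun s => ?_)
    rw [Real.norm_eq_abs, abs_of_nonneg (integral_nonneg fun y => abs_nonneg _)]
    exact hG'bound x s
  have hbdd : BddAbove (Set.range fun x : EuclideanSpace ℝ (Fin n) =>
      ∫ s in (0:ℝ)..1, ∫ y in ball x 1, |f y s|) := by
    refine ⟨M * V.toReal, ?_⟩
    rintro _ ⟨x, rfl⟩
    show ∫ s in (0:ℝ)..1, ∫ y in ball x 1, |f y s| ≤ M * V.toReal
    rw [intervalIntegral.integral_of_le zero_le_one]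
    calc ∫ s in Set.Ioc (0:ℝ) 1, ∫ y in ball x 1, |f y s|
        ≤ ∫ _ in Set.Ioc (0:ℝ) 1, M * V.toReal :=
          integral_mono_of_nonneg
            (ae_of_all _ fun s => integral_nonneg fun y => abs_nonneg _)
            (integrableOn_const measure_Ioc_lt_top.ne)
            (ae_of_all _ fun s => hG'bound x s)
      _ = M * V.toReal := by
          rw [setIntegral_const, smul_eq_mul, measureReal_def, Real.volume_Ioc]
          norm_num
  have hS0 : 0 ≤ S := by
    have h1 : (0:ℝ) ≤ ∫ s in (0:ℝ)..1, ∫ y in ball (0 : EuclideanSpace ℝ (Fin n)) 1, |f y s| :=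
      intervalIntegral.integral_nonneg zero_le_one
        (fun s _ => integral_nonneg fun y => abs_nonneg _)
    exact le_trans h1 (le_ciSup hbdd 0)
  -- the sup bound for local averages
  have hGS : ∀ x : EuclideanSpace ℝ (Fin n),
      ∫⁻ s in Set.Ico (0:ℝ) t₀, G x s ≤ ENNReal.ofReal S := by
    intro x
    have e1 : ∫⁻ s in Set.Ico (0:ℝ) t₀, G x s ≤ ∫⁻ s in Set.Ioc (0:ℝ) 1, G x s := by
      rw [← restrict_Ioo_eq_restrict_Ico]
      exact lintegral_mono' (Measure.restrict_mono
        (Set.Ioo_subset_Ioc_self.trans (Set.Ioc_subset_Ioc_right ht₀1)) le_rfl) le_rfl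
    refine e1.trans ?_
    have per_s : ∀ s, G x s = ENNReal.ofReal (∫ y in ball x 1, |f y s|) :=
      fun s => (ofReal_integral_eq_lintegral_ofReal (int_a x s)
        (ae_of_all _ fun y => abs_nonneg _)).symm
    calc ∫⁻ s in Set.Ioc (0:ℝ) 1, G x s
        = ∫⁻ s in Set.Ioc (0:ℝ) 1, ENNReal.ofReal (∫ y in ball x 1, |f y s|) :=
          lintegral_congr per_s
      _ = ENNReal.ofReal (∫ s in Set.Ioc (0:ℝ) 1, ∫ y in ball x 1, |f y s|) :=
          (ofReal_integral_eq_lintegral_ofReal (hG'int x)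
            (ae_of_all _ fun s => integral_nonneg fun y => abs_nonneg _)).symm
      _ ≤ ENNReal.ofReal S := by
          apply ENNReal.ofReal_le_ofReal
          rw [← intervalIntegral.integral_of_le zero_le_one]
          exact le_ciSup hbdd x
  -- main chain
  have main1 : |∫ s in (0:ℝ)..t₀, ∫ y, K (x₀ - y) (t₀ - s) * f y s|
      ≤ ∫ s in Set.Ico (0:ℝ) t₀, |∫ y, K (x₀ - y) (t₀ - s) * f y s| := by
    refine (intervalIntegral.abs_integral_le_integral_abs ht₀.le).trans ?_
    rw [intervalIntegral.integral_of_le ht₀.le, ← restrict_Ioo_eq_restrict_Ioc,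
      restrict_Ioo_eq_restrict_Ico]
  have main2 : ∫ s in Set.Ico (0:ℝ) t₀, |∫ y, K (x₀ - y) (t₀ - s) * f y s|
      ≤ ∫ s in Set.Ico (0:ℝ) t₀, (H s).toReal :=
    integral_mono_of_nonneg (ae_of_all _ fun s => abs_nonneg _) hHint
      ((ae_restrict_iff' measurableSet_Ico).2 (ae_of_all _ step2))
  have main3 : ∫ s in Set.Ico (0:ℝ) t₀, (H s).toReal
      = (∫⁻ s in Set.Ico (0:ℝ) t₀, H s).toReal :=
    integral_toReal (hHmeas.aemeasurable.restrict)
      (ae_of_all _ fun s => lt_of_le_of_lt (hHle s) (lt_top_iff_ne_top.mpr hBtop))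
  have main4 : ∫⁻ s in Set.Ico (0:ℝ) t₀, H s
      ≤ ce * (ENNReal.ofReal IW * ENNReal.ofReal S) := by
    have e1 : ∫⁻ s in Set.Ico (0:ℝ) t₀, H s
        = ce * ∫⁻ x, W x * ∫⁻ s in Set.Ico (0:ℝ) t₀, G x s := by
      rw [hH_def]
      rw [lintegral_const_mul' ce _ hce]
      congr 1
      exact aux_swap2 _ _ W hWmeas hWtop (fun s x => G x s) hGmeas
    rw [e1]
    refine mul_le_mul_right ?_ _
    calc ∫⁻ x, W x * ∫⁻ s in Set.Ico (0:ℝ) t₀, G x s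
        ≤ ∫⁻ x, W x * ENNReal.ofReal S :=
          lintegral_mono fun x => mul_le_mul_right (hGS x) _
      _ = (∫⁻ x, W x) * ENNReal.ofReal S := lintegral_mul_const _ hWmeas
      _ = ENNReal.ofReal IW * ENNReal.ofReal S := by rw [hIWe]
  have hBtop2 : ce * (ENNReal.ofReal IW * ENNReal.ofReal S) ≠ ⊤ :=
    ENNReal.mul_ne_top hce (ENNReal.mul_ne_top ENNReal.ofReal_ne_top ENNReal.ofReal_ne_top)
  calc |∫ s in (0:ℝ)..t₀, ∫ y, K (x₀ - y) (t₀ - s) * f y s|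
      ≤ ∫ s in Set.Ico (0:ℝ) t₀, |∫ y, K (x₀ - y) (t₀ - s) * f y s| := main1
    _ ≤ ∫ s in Set.Ico (0:ℝ) t₀, (H s).toReal := main2
    _ = (∫⁻ s in Set.Ico (0:ℝ) t₀, H s).toReal := main3
    _ ≤ (ce * (ENNReal.ofReal IW * ENNReal.ofReal S)).toReal :=
        ENNReal.toReal_mono hBtop2 main4
    _ = C * 3 ^ p * (V⁻¹).toReal * IW * S := by
        rw [hce_def, ENNReal.toReal_mul, ENNReal.toReal_mul, ENNReal.toReal_mul,
          ENNReal.toReal_ofReal (by positivity : (0:ℝ) ≤ C * 3 ^ p),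
          ENNReal.toReal_ofReal hIWnn, ENNReal.toReal_ofReal hS0]
        ring
    _ ≤ (C * 3 ^ p * (V⁻¹).toReal * IW + 1) * S :=
        mul_le_mul_of_nonneg_right (by linarith) hS0
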